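/- Let G = (V, E, w) be a finite weighted graph and let F be a minimum spanning forest of G. Let G⁺ be obtained from G by adding a new edge e = (u, v) with weight w(e). Then F ∪ {e} contains a minimum spanning forest of G⁺; in particular, a minimum spanning forest of G⁺ can be computed using only the edges of F together with e. -/

import Mathlib

open SimpleGraph Finset

variable {V : Type*} {W : Type*} [AddCommMonoid W] [LinearOrder W] [IsOrderedAddMonoid W]

/-- The simple graph whose edges are a given finite set of (unordered) pairs. -/
def fromEdges (F : Finset (Sym2 V)) : SimpleGraph V := SimpleGraph.fromEdgeSet ↑F

/-- Two edge sets induce the same connected components (reachability). -/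
def SameComponents (E F : Finset (Sym2 V)) : Prop :=
  ∀ a b : V, (fromEdges E).Reachable a b ↔ (fromEdges F).Reachable a b

/-- `F` is a spanning forest of the graph with edge set `E`. -/
def IsSpanningForest (E F : Finset (Sym2 V)) : Prop :=
  F ⊆ E ∧ (fromEdges F).IsAcyclic ∧ SameComponents E F

/-- `F` is a minimum spanning forest of the graph with edge set `E` and weights `w`. -/
def IsMSF (E : Finset (Sym2 V)) (w : Sym2 V → W) (F : Finset (Sym2 V)) : Prop :=
  IsSpanningForest E F ∧ ∀ F', IsSpanningForest E F' → F.sum w ≤ F'.sum w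

/-- `T` is a minimum spanning tree of the (connected) graph with edge set `E`. -/
def IsMST (E : Finset (Sym2 V)) (w : Sym2 V → W) (T : Finset (Sym2 V)) : Prop :=
  IsMSF E w T ∧ (fromEdges T).Connected

section Helpers

variable {V : Type*} [DecidableEq V]

lemma fromEdges_adj {S : Finset (Sym2 V)} {a b : V} :
    (fromEdges S).Adj a b ↔ s(a, b) ∈ S ∧ a ≠ b := by
  simp [fromEdges]

lemma fromEdges_le {S T : Finset (Sym2 V)} (h : S ⊆ T) : fromEdges S ≤ fromEdges T := by
  intro a b hab
  rw [fromEdges_adj] at hab ⊢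
  exact ⟨h hab.1, hab.2⟩

lemma reach_mono {S T : Finset (Sym2 V)} (h : S ⊆ T) {a b : V}
    (hr : (fromEdges S).Reachable a b) : (fromEdges T).Reachable a b :=
  hr.mono (fromEdges_le h)

lemma fromEdges_erase (S : Finset (Sym2 V)) (g : Sym2 V) :
    fromEdges (S.erase g) = fromEdges S \ SimpleGraph.fromEdgeSet {g} := by
  ext a b
  rw [fromEdges_adj, SimpleGraph.sdiff_adj, fromEdges_adj, Finset.mem_erase,
    SimpleGraph.fromEdgeSet_adj]
  constructor
  · rintro ⟨⟨h1, h2⟩, h3⟩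
    exact ⟨⟨h2, h3⟩, by simp [h1]⟩
  · rintro ⟨⟨h2, h3⟩, h1⟩
    refine ⟨⟨?_, h2⟩, h3⟩
    intro h
    exact h1 ⟨by simp [h], h3⟩

lemma fromEdges_insert_adj {S : Finset (Sym2 V)} {g : Sym2 V} {a b : V} :
    (fromEdges (insert g S)).Adj a b ↔ (s(a, b) = g ∧ a ≠ b) ∨ (fromEdges S).Adj a b := by
  rw [fromEdges_adj, Finset.mem_insert, or_and_right, fromEdges_adj]

lemma reach_insert_decomp {S : Finset (Sym2 V)} {x y a b : V}
    (h : (fromEdges (insert s(x, y) S)).Reachable a b) :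
    (fromEdges S).Reachable a b ∨
      ((fromEdges S).Reachable a x ∧ (fromEdges S).Reachable y b) ∨
      ((fromEdges S).Reachable a y ∧ (fromEdges S).Reachable x b) := by
  obtain ⟨p⟩ := h
  induction p with
  | nil => exact Or.inl (Reachable.refl _)
  | @cons u v w' hadj q ih =>
    rw [fromEdges_insert_adj] at hadj
    rcases hadj with ⟨heq, hne⟩ | hadj
    · rcases Sym2.eq_iff.mp heq with ⟨rfl, rfl⟩ | ⟨rfl, rfl⟩
      · rcases ih with h1 | ⟨h1, h2⟩ | ⟨h1, h2⟩
        · exact Or.inr (Or.inl ⟨Reachable.refl _, h1⟩)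
        · exact Or.inr (Or.inl ⟨Reachable.refl _, h2⟩)
        · exact Or.inl h2
      · rcases ih with h1 | ⟨h1, h2⟩ | ⟨h1, h2⟩
        · exact Or.inr (Or.inr ⟨Reachable.refl _, h1⟩)
        · exact Or.inl h2
        · exact Or.inr (Or.inr ⟨Reachable.refl _, h2⟩)
    · have hr : (fromEdges S).Reachable u v := hadj.reachable
      rcases ih with h1 | ⟨h1, h2⟩ | ⟨h1, h2⟩
      · exact Or.inl (hr.trans h1)
      · exact Or.inr (Or.inl ⟨hr.trans h1, h2⟩)
      · exact Or.inr (Or.inr ⟨hr.trans h1, h2⟩)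

lemma reach_insert_of_reach {S : Finset (Sym2 V)} {g : Sym2 V} {a b : V}
    (h : (fromEdges S).Reachable a b) : (fromEdges (insert g S)).Reachable a b :=
  reach_mono (Finset.subset_insert _ _) h

lemma reach_insert_edge {S : Finset (Sym2 V)} {x y : V} (hxy : x ≠ y) :
    (fromEdges (insert s(x, y) S)).Reachable x y :=
  (fromEdges_insert_adj.mpr (Or.inl ⟨rfl, hxy⟩)).reachable

lemma reach_insert_iff {S : Finset (Sym2 V)} {x y : V} (hxy : x ≠ y) (a b : V) :
    (fromEdges (insert s(x, y) S)).Reachable a b ↔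
      (fromEdges S).Reachable a b ∨
        ((fromEdges S).Reachable a x ∧ (fromEdges S).Reachable y b) ∨
        ((fromEdges S).Reachable a y ∧ (fromEdges S).Reachable x b) := by
  constructor
  · exact reach_insert_decomp
  · rintro (h | ⟨h1, h2⟩ | ⟨h1, h2⟩)
    · exact reach_insert_of_reach h
    · exact ((reach_insert_of_reach h1).trans (reach_insert_edge hxy)).trans
        (reach_insert_of_reach h2)
    · exact ((reach_insert_of_reach h1).trans (reach_insert_edge hxy).symm).trans
        (reach_insert_of_reach h2)

lemma comps_swap {B : Finset (Sym2 V)} {c d x y : V} (hxy : x ≠ y) (hcd : c ≠ d)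
    (hcx : (fromEdges B).Reachable c x) (hdy : (fromEdges B).Reachable d y) :
    ∀ a b, (fromEdges (insert s(x, y) B)).Reachable a b ↔
      (fromEdges (insert s(c, d) B)).Reachable a b := by
  intro a b
  rw [reach_insert_iff hxy, reach_insert_iff hcd]
  constructor
  · rintro (h | ⟨h1, h2⟩ | ⟨h1, h2⟩)
    · exact Or.inl h
    · exact Or.inr (Or.inl ⟨h1.trans hcx.symm, hdy.trans h2⟩)
    · exact Or.inr (Or.inr ⟨h1.trans hdy.symm, hcx.trans h2⟩)
  · rintro (h | ⟨h1, h2⟩ | ⟨h1, h2⟩)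
    · exact Or.inl h
    · exact Or.inr (Or.inl ⟨h1.trans hcx, hdy.symm.trans h2⟩)
    · exact Or.inr (Or.inr ⟨h1.trans hdy, hcx.symm.trans h2⟩)

lemma fromEdges_acyclic_mono {S T : Finset (Sym2 V)} (h : S ⊆ T)
    (hT : (fromEdges T).IsAcyclic) : (fromEdges S).IsAcyclic := by
  intro v c hc
  refine hT (c.transfer (fromEdges T) fun e he => ?_) (hc.transfer _)
  have h1 := c.edges_subset_edgeSet he
  simp only [fromEdges, SimpleGraph.edgeSet_fromEdgeSet, Set.mem_diff, Finset.mem_coe,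
    Set.mem_setOf_eq] at h1 ⊢
  exact ⟨h h1.1, h1.2⟩

lemma acyclic_insert {S : Finset (Sym2 V)} {x y : V}
    (hS : (fromEdges S).IsAcyclic) (hxy : ¬(fromEdges S).Reachable x y) :
    (fromEdges (insert s(x, y) S)).IsAcyclic := by
  intro v c hc
  by_cases hmem : s(x, y) ∈ c.edges
  · have h := (SimpleGraph.adj_and_reachable_delete_edges_iff_exists_cycle
      (G := fromEdges (insert s(x, y) S))).mpr ⟨v, c, hc, hmem⟩
    apply hxy
    refine h.2.mono ?_
    intro a b hab
    rw [SimpleGraph.deleteEdges_adj] at hab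
    obtain ⟨hab1, hab2⟩ := hab
    rw [fromEdges_insert_adj] at hab1
    rcases hab1 with ⟨heq, hne⟩ | hadj
    · exact absurd (by simp [heq]) hab2
    · exact hadj
  · refine hS (c.transfer (fromEdges S) fun e he => ?_) (hc.transfer _)
    have h1 := c.edges_subset_edgeSet he
    have hne : e ≠ s(x, y) := fun h => hmem (h ▸ he)
    simp only [fromEdges, SimpleGraph.edgeSet_fromEdgeSet, Set.mem_diff, Finset.mem_coe,
      Finset.coe_insert, Set.mem_insert_iff, Set.mem_setOf_eq] at h1 ⊢
    exact ⟨h1.1.resolve_left hne, h1.2⟩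

lemma exists_crossing_edge {S R : SimpleGraph V} {c d : V} (p : S.Walk c d) :
    ¬R.Reachable c d →
    (∀ t ∈ p.support, R.Reachable c t ∨ R.Reachable d t) →
    ∃ x y, S.Adj x y ∧ s(x, y) ∈ p.edges ∧ ¬R.Reachable x y ∧
      R.Reachable c x ∧ R.Reachable d y := by
  induction p with
  | nil => exact fun h _ => absurd (Reachable.refl _) h
  | @cons c z d hadj q ih =>
    intro hcd hcomp
    by_cases hcz : R.Reachable c z
    · have hzd : ¬R.Reachable z d := fun h => hcd (hcz.trans h)
      obtain ⟨x, y, h1, h2, h3, h4, h5⟩ := ih hzd (fun t ht => by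
        rcases hcomp t (by simp [ht]) with h | h
        · exact Or.inl (hcz.symm.trans h)
        · exact Or.inr h)
      exact ⟨x, y, h1, by simp [h2], h3, hcz.trans h4, h5⟩
    · refine ⟨c, z, hadj, by simp, hcz, Reachable.refl _, ?_⟩
      rcases hcomp z (by simp) with h | h
      · exact absurd h hcz
      · exact h

lemma path_edge_separates {S : SimpleGraph V} (hS : S.IsAcyclic) {c d : V}
    (p : S.Walk c d) (hp : p.IsPath) {x y : V} (hmem : s(x, y) ∈ p.edges) :
    ¬(S \ SimpleGraph.fromEdgeSet {s(x, y)}).Reachable c d ∧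
      (((S \ SimpleGraph.fromEdgeSet {s(x, y)}).Reachable c x ∧
        (S \ SimpleGraph.fromEdgeSet {s(x, y)}).Reachable y d) ∨
       ((S \ SimpleGraph.fromEdgeSet {s(x, y)}).Reachable c y ∧
        (S \ SimpleGraph.fromEdgeSet {s(x, y)}).Reachable x d)) := by
  induction p with
  | nil => simp at hmem
  | @cons c z d hadj q ih =>
    have hbridge : ¬(S \ SimpleGraph.fromEdgeSet {s(c, z)}).Reachable c z :=
      ((SimpleGraph.isBridge_iff.mp (isAcyclic_iff_forall_adj_isBridge.mp hS hadj)))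
    rw [Walk.edges_cons, List.mem_cons] at hmem
    have hnodup : s(c, z) ∉ q.edges := by
      have := hp.isTrail.edges_nodup
      rw [Walk.edges_cons, List.nodup_cons] at this
      exact this.1
    have hzd : (S \ SimpleGraph.fromEdgeSet {s(c, z)}).Reachable z d := by
      refine ⟨q.toDeleteEdges {s(c, z)} fun e he => ?_⟩
      simp only [Set.mem_singleton_iff]
      exact fun hee => hnodup (hee ▸ he)
    rcases hmem with heq | hmem
    · rcases Sym2.eq_iff.mp heq with ⟨rfl, rfl⟩ | ⟨rfl, rfl⟩
      · exact ⟨fun h => hbridge (h.trans hzd.symm), Or.inl ⟨Reachable.refl _, hzd⟩⟩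
      · rw [Sym2.eq_swap (a := x) (b := y)]
        exact ⟨fun h => hbridge (h.trans hzd.symm), Or.inr ⟨Reachable.refl _, hzd⟩⟩
    · have hqp : q.IsPath := hp.of_cons
      have hne : s(c, z) ≠ s(x, y) := by
        intro h
        have := hp.isTrail.edges_nodup
        rw [Walk.edges_cons, List.nodup_cons] at this
        exact this.1 (h ▸ hmem)
      obtain ⟨h1, h2⟩ := ih hqp hmem
      have hedge : (S \ SimpleGraph.fromEdgeSet {s(x, y)}).Adj c z := by
        rw [SimpleGraph.sdiff_adj, SimpleGraph.fromEdgeSet_adj]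
        exact ⟨hadj, fun h => hne (by simpa using h.1)⟩
      refine ⟨fun h => h1 (hedge.symm.reachable.trans h), ?_⟩
      rcases h2 with ⟨ha, hb⟩ | ⟨ha, hb⟩
      · exact Or.inl ⟨hedge.reachable.trans ha, hb⟩
      · exact Or.inr ⟨hedge.reachable.trans ha, hb⟩

end Helpers

section Main

variable {V : Type*} [DecidableEq V]

lemma msf_step (E : Finset (Sym2 V)) (w : Sym2 V → ℝ) (F : Finset (Sym2 V))
    (hF : IsMSF E w F) (e : Sym2 V) (M : Finset (Sym2 V))
    (hM : IsMSF (insert e E) w M) {g : Sym2 V} (hg : g ∈ M \ insert e F) :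
    ∃ M', IsMSF (insert e E) w M' ∧ (M' \ insert e F).card < (M \ insert e F).card := by
  obtain ⟨hgM, hgA⟩ := Finset.mem_sdiff.mp hg
  have hge : g ≠ e := fun h => hgA (h ▸ Finset.mem_insert_self _ _)
  have hgF : g ∉ F := fun h => hgA (Finset.mem_insert_of_mem h)
  have hgE : g ∈ E := (Finset.mem_insert.mp (hM.1.1 hgM)).resolve_left hge
  obtain ⟨c, d, rfl⟩ : ∃ c d, g = s(c, d) := Sym2.ind (fun c d => ⟨c, d, rfl⟩) g
  by_cases hcd : c = d
  · subst hcd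
    have hgraph : fromEdges (M.erase s(c, c)) = fromEdges M := by
      ext a b
      rw [fromEdges_adj, fromEdges_adj, Finset.mem_erase]
      constructor
      · rintro ⟨⟨_, h1⟩, h2⟩; exact ⟨h1, h2⟩
      · rintro ⟨h1, h2⟩
        refine ⟨⟨fun h => h2 ?_, h1⟩, h2⟩
        rcases Sym2.eq_iff.mp h with ⟨rfl, rfl⟩ | ⟨rfl, rfl⟩ <;> rfl
    have hgraph2 : fromEdges (insert s(c, c) F) = fromEdges F := by
      ext a b
      rw [fromEdges_adj, fromEdges_adj, Finset.mem_insert]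
      constructor
      · rintro ⟨h1 | h1, h2⟩
        · exact absurd (by rcases Sym2.eq_iff.mp h1 with ⟨rfl, rfl⟩ | ⟨rfl, rfl⟩ <;> rfl) h2
        · exact ⟨h1, h2⟩
      · rintro ⟨h1, h2⟩; exact ⟨Or.inr h1, h2⟩
    have hsf : IsSpanningForest (insert e E) (M.erase s(c, c)) :=
      ⟨(Finset.erase_subset _ _).trans hM.1.1, by rw [hgraph]; exact hM.1.2.1,
        fun a b => (hM.1.2.2 a b).trans (by rw [hgraph])⟩
    have hw1 : w s(c, c) ≤ 0 := by
      have h := hM.2 _ hsf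
      rw [Finset.sum_erase_eq_sub hgM] at h
      linarith
    have hsf2 : IsSpanningForest E (insert s(c, c) F) :=
      ⟨Finset.insert_subset hgE hF.1.1, by rw [hgraph2]; exact hF.1.2.1,
        fun a b => (hF.1.2.2 a b).trans (by rw [hgraph2])⟩
    have hw2 : 0 ≤ w s(c, c) := by
      have h := hF.2 _ hsf2
      rw [Finset.sum_insert hgF] at h
      linarith
    refine ⟨M.erase s(c, c), ⟨hsf, fun T hT => ?_⟩, ?_⟩
    · rw [Finset.sum_erase_eq_sub hgM]
      have := hM.2 T hT
      linarith
    · have heq : (M.erase s(c, c)) \ insert e F = (M \ insert e F).erase s(c, c) := by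
        ext t
        simp only [Finset.mem_sdiff, Finset.mem_erase]
        tauto
      rw [heq]
      exact Finset.card_erase_lt_of_mem hg
  · -- nondiagonal case
    have hadjM : (fromEdges M).Adj c d := fromEdges_adj.mpr ⟨hgM, hcd⟩
    have hMacyc := hM.1.2.1
    have hbridge : ¬(fromEdges M \ SimpleGraph.fromEdgeSet {s(c, d)}).Reachable c d :=
      (SimpleGraph.isBridge_iff.mp (isAcyclic_iff_forall_adj_isBridge.mp hMacyc hadjM))
    have hnotReach : ¬(fromEdges (M.erase s(c, d))).Reachable c d := by
      rw [fromEdges_erase]; exact hbridge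
    have hMinsert : insert s(c, d) (M.erase s(c, d)) = M := Finset.insert_erase hgM
    have hreachF : (fromEdges F).Reachable c d :=
      (hF.1.2.2 c d).mp (fromEdges_adj.mpr ⟨hgE, hcd⟩).reachable
    obtain ⟨p0⟩ := hreachF
    set p : (fromEdges F).Walk c d := (p0.toPath : (fromEdges F).Path c d).1 with hp
    have hppath : p.IsPath := (p0.toPath).2
    have hcomp : ∀ t ∈ p.support, (fromEdges (M.erase s(c, d))).Reachable c t ∨
        (fromEdges (M.erase s(c, d))).Reachable d t := by
      intro t ht
      have h1 : (fromEdges F).Reachable c t := ⟨p.takeUntil t ht⟩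
      have h2 : (fromEdges M).Reachable c t :=
        (hM.1.2.2 c t).mp (reach_mono (Finset.subset_insert e E) ((hF.1.2.2 c t).mpr h1))
      rw [← hMinsert] at h2
      rcases reach_insert_decomp h2 with h | ⟨h3, h4⟩ | ⟨h3, h4⟩
      · exact Or.inl h
      · exact Or.inr h4
      · exact absurd h3 hnotReach
    obtain ⟨x, y, hxyadj, hxymem, hxynr, hcx, hdy⟩ :=
      exists_crossing_edge p hnotReach hcomp
    have hxy : x ≠ y := hxyadj.ne
    have hfF : s(x, y) ∈ F := (fromEdges_adj.mp hxyadj).1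
    have hfg : s(x, y) ≠ s(c, d) := fun h => hgF (h ▸ hfF)
    have hfM : s(x, y) ∉ M := fun h =>
      hxynr (fromEdges_adj.mpr ⟨Finset.mem_erase.mpr ⟨hfg, h⟩, hxy⟩).reachable
    have hfMe : s(x, y) ∉ M.erase s(c, d) := fun h => hfM (Finset.mem_of_mem_erase h)
    have hFacyc := hF.1.2.1
    obtain ⟨hPnr, hPparts⟩ := path_edge_separates hFacyc p hppath hxymem
    rw [← fromEdges_erase] at hPnr hPparts
    have hFinsert : insert s(x, y) (F.erase s(x, y)) = F := Finset.insert_erase hfF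
    have hgFe : s(c, d) ∉ F.erase s(x, y) := fun h => hgF (Finset.mem_of_mem_erase h)
    have hFeacyc : (fromEdges (F.erase s(x, y))).IsAcyclic :=
      fromEdges_acyclic_mono (Finset.erase_subset _ _) hFacyc
    have hF''acyc : (fromEdges (insert s(c, d) (F.erase s(x, y)))).IsAcyclic :=
      acyclic_insert hFeacyc hPnr
    have hFswap : ∀ a b, (fromEdges (insert s(c, d) (F.erase s(x, y)))).Reachable a b ↔
        (fromEdges F).Reachable a b := by
      intro a b
      rcases hPparts with ⟨h1, h2⟩ | ⟨h1, h2⟩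
      · exact (comps_swap hcd hxy h1.symm h2 a b).trans (by rw [hFinsert])
      · have h3 : insert s(y, x) (F.erase s(x, y)) = F := by
          rw [Sym2.eq_swap (a := y) (b := x)]; exact hFinsert
        exact (comps_swap hcd hxy.symm h1.symm h2 a b).trans (by rw [h3])
    have hF'' : IsSpanningForest E (insert s(c, d) (F.erase s(x, y))) :=
      ⟨Finset.insert_subset hgE ((Finset.erase_subset _ _).trans hF.1.1), hF''acyc,
        fun a b => (hF.1.2.2 a b).trans (hFswap a b).symm⟩
    have hwfg : w s(x, y) ≤ w s(c, d) := by
      have h := hF.2 _ hF''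
      rw [Finset.sum_insert hgFe, Finset.sum_erase_eq_sub hfF] at h
      linarith
    have hM'acyc : (fromEdges (insert s(x, y) (M.erase s(c, d)))).IsAcyclic :=
      acyclic_insert (fromEdges_acyclic_mono (Finset.erase_subset _ _) hMacyc) hxynr
    have hMswap : ∀ a b, (fromEdges (insert s(x, y) (M.erase s(c, d)))).Reachable a b ↔
        (fromEdges M).Reachable a b := by
      intro a b
      exact (comps_swap hxy hcd hcx hdy a b).trans (by rw [hMinsert])
    have hM' : IsSpanningForest (insert e E) (insert s(x, y) (M.erase s(c, d))) :=
      ⟨Finset.insert_subset (Finset.mem_insert_of_mem (hF.1.1 hfF))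
        ((Finset.erase_subset _ _).trans hM.1.1), hM'acyc,
        fun a b => (hM.1.2.2 a b).trans (hMswap a b).symm⟩
    refine ⟨insert s(x, y) (M.erase s(c, d)), ⟨hM', fun T hT => ?_⟩, ?_⟩
    · have hMT := hM.2 T hT
      rw [Finset.sum_insert hfMe, Finset.sum_erase_eq_sub hgM]
      linarith
    · have hfA : s(x, y) ∈ insert e F := Finset.mem_insert_of_mem hfF
      have heq : (insert s(x, y) (M.erase s(c, d))) \ insert e F =
          (M \ insert e F).erase s(c, d) := by
        ext t
        simp only [Finset.mem_sdiff, Finset.mem_insert, Finset.mem_erase]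
        constructor
        · rintro ⟨rfl | ⟨hne, htM⟩, hta⟩
          · exact absurd hfA (by simpa using hta)
          · exact ⟨hne, htM, hta⟩
        · rintro ⟨hne, htM, hta⟩
          exact ⟨Or.inr ⟨hne, htM⟩, hta⟩
      rw [heq]
      exact Finset.card_erase_lt_of_mem hg

end Main

/-- Single-edge incremental update: if `F` is an MSF of `G` and `G⁺` is obtained by
adding one edge `e`, then an MSF of `G⁺` can be found among the edges of `F` plus `e`. -/
theorem msf_incremental_single_edge {V : Type*} [Fintype V] [DecidableEq V]
    (E : Finset (Sym2 V)) (w : Sym2 V → ℝ)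
    (F : Finset (Sym2 V)) (hF : IsMSF E w F) (e : Sym2 V) :
    ∃ F' : Finset (Sym2 V), IsMSF (insert e E) w F' ∧ F' ⊆ insert e F := by
  classical
  obtain ⟨u, v, rfl⟩ : ∃ u v, e = s(u, v) := Sym2.ind (fun u v => ⟨u, v, rfl⟩) e
  have hbase : ∃ T, IsSpanningForest (insert s(u, v) E) T := by
    by_cases hr : (fromEdges F).Reachable u v
    · refine ⟨F, hF.1.1.trans (Finset.subset_insert _ _), hF.1.2.1, fun a b => ?_⟩
      have hEuv : (fromEdges E).Reachable u v := (hF.1.2.2 u v).mpr hr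
      constructor
      · intro h
        rcases reach_insert_decomp h with h1 | ⟨h1, h2⟩ | ⟨h1, h2⟩
        · exact (hF.1.2.2 a b).mp h1
        · exact (hF.1.2.2 a b).mp ((h1.trans hEuv).trans h2)
        · exact (hF.1.2.2 a b).mp ((h1.trans hEuv.symm).trans h2)
      · exact fun h => reach_mono (Finset.subset_insert _ _) ((hF.1.2.2 a b).mpr h)
    · have huv : u ≠ v := fun h => hr (h ▸ Reachable.refl _)
      have hrE : ¬(fromEdges E).Reachable u v := fun h => hr ((hF.1.2.2 u v).mp h)
      refine ⟨insert s(u, v) F, Finset.insert_subset_insert _ hF.1.1,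
        acyclic_insert hF.1.2.1 hr, fun a b => ?_⟩
      rw [reach_insert_iff huv, reach_insert_iff huv]
      constructor
      · rintro (h | ⟨h1, h2⟩ | ⟨h1, h2⟩)
        · exact Or.inl ((hF.1.2.2 _ _).mp h)
        · exact Or.inr (Or.inl ⟨(hF.1.2.2 _ _).mp h1, (hF.1.2.2 _ _).mp h2⟩)
        · exact Or.inr (Or.inr ⟨(hF.1.2.2 _ _).mp h1, (hF.1.2.2 _ _).mp h2⟩)
      · rintro (h | ⟨h1, h2⟩ | ⟨h1, h2⟩)
        · exact Or.inl ((hF.1.2.2 _ _).mpr h)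
        · exact Or.inr (Or.inl ⟨(hF.1.2.2 _ _).mpr h1, (hF.1.2.2 _ _).mpr h2⟩)
        · exact Or.inr (Or.inr ⟨(hF.1.2.2 _ _).mpr h1, (hF.1.2.2 _ _).mpr h2⟩)
  obtain ⟨T0, hT0⟩ := hbase
  set A := (insert s(u, v) E).powerset.filter
    (fun T => IsSpanningForest (insert s(u, v) E) T) with hA
  have hAne : A.Nonempty :=
    ⟨T0, Finset.mem_filter.mpr ⟨Finset.mem_powerset.mpr hT0.1, hT0⟩⟩
  obtain ⟨M, hMA, hMmin⟩ := Finset.exists_min_image A (fun T => T.sum w) hAne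
  have hMmsf : IsMSF (insert s(u, v) E) w M :=
    ⟨(Finset.mem_filter.mp hMA).2, fun T hT =>
      hMmin T (Finset.mem_filter.mpr ⟨Finset.mem_powerset.mpr hT.1, hT⟩)⟩
  clear hMA hMmin hAne hA hT0
  have main : ∀ n (M : Finset (Sym2 V)), (M \ insert s(u, v) F).card ≤ n →
      IsMSF (insert s(u, v) E) w M →
      ∃ F', IsMSF (insert s(u, v) E) w F' ∧ F' ⊆ insert s(u, v) F := by
    intro n
    induction n with
    | zero =>
      intro M hcard hM'
      have h0 : M \ insert s(u, v) F = ∅ := Finset.card_eq_zero.mp (Nat.le_zero.mp hcard)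
      exact ⟨M, hM', Finset.sdiff_eq_empty_iff_subset.mp h0⟩
    | succ n ih =>
      intro M hcard hM'
      by_cases hsub : M ⊆ insert s(u, v) F
      · exact ⟨M, hM', hsub⟩
      · obtain ⟨g, hg⟩ := Finset.sdiff_nonempty.mpr hsub
        obtain ⟨M', hM'2, hlt⟩ := msf_step E w F hF s(u, v) M hM' hg
        exact ih M' (by omega) hM'2
  exact main _ M le_rfl hMmsf
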